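/- For 0 < c < 1, the function L(x) = (((1-x)/x)^c + 1)^{-1} is concave on the interval (0, 1/2]. -/

import Mathlib

open Real Set

lemma hdt (x : ℝ) (hx : x ≠ 0) : HasDerivAt (fun x : ℝ => (1-x)/x) (-(1/x^2)) x := by
  have h := (((hasDerivAt_id x).const_sub 1).div (hasDerivAt_id x) hx)
  refine h.congr_deriv ?_
  simp only [id]
  field_simp; ring

lemma hdpow (p : ℝ) (x : ℝ) (hx : x ≠ 0) (ht : (1-x)/x ≠ 0) :
    HasDerivAt (fun x : ℝ => ((1-x)/x) ^ p) (p * ((1-x)/x) ^ (p-1) * (-(1/x^2))) x := by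
  have h := (hdt x hx).rpow_const (p := p) (Or.inl ht)
  convert h using 1
  ring

lemma hd1 (c x : ℝ) (hx : x ≠ 0) (ht : 0 < (1-x)/x) :
    HasDerivAt (fun x : ℝ => (((1 - x) / x) ^ c + 1)⁻¹)
      (c * ((1-x)/x) ^ (c-1) / (x^2 * (((1-x)/x)^c + 1)^2)) x := by
  have h0 : ((1-x)/x) ^ c + 1 ≠ 0 := by positivity
  have h := ((hdpow c x hx ht.ne').add_const 1).inv h0
  refine h.congr_deriv ?_
  field_simp

-- second derivative (quotient rule), value left explicit
lemma hd2 (c x : ℝ) (hx : x ≠ 0) (ht : 0 < (1-x)/x) :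
    HasDerivAt (fun x : ℝ => c * ((1-x)/x) ^ (c-1) / (x^2 * (((1-x)/x)^c + 1)^2))
      ((c * ((c-1) * ((1-x)/x)^(c-2) * (-(1/x^2))) * (x^2 * (((1-x)/x)^c + 1)^2)
        - c * ((1-x)/x)^(c-1) *
          (2*x * (((1-x)/x)^c + 1)^2
            + x^2 * (2 * (((1-x)/x)^c + 1) * (c * ((1-x)/x)^(c-1) * (-(1/x^2))))))
        / (x^2 * (((1-x)/x)^c + 1)^2)^2) x := by
  have h0 : ((1-x)/x) ^ c + 1 ≠ 0 := by positivity
  have hden : x^2 * (((1-x)/x)^c + 1)^2 ≠ 0 := by positivity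
  have hN : HasDerivAt (fun x : ℝ => c * ((1-x)/x) ^ (c-1))
      (c * ((c-1) * ((1-x)/x)^(c-2) * (-(1/x^2)))) x := by
    have := (hdpow (c-1) x hx ht.ne').const_mul c
    refine this.congr_deriv ?_
    ring_nf
  have hD : HasDerivAt (fun x : ℝ => x^2 * (((1-x)/x)^c + 1)^2)
      (2*x * (((1-x)/x)^c + 1)^2
        + x^2 * (2 * (((1-x)/x)^c + 1) * (c * ((1-x)/x)^(c-1) * (-(1/x^2))))) x := by
    have h1 : HasDerivAt (fun x : ℝ => x^2) (2*x) x := by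
      simpa using hasDerivAt_pow 2 x
    have h2 : HasDerivAt (fun x : ℝ => (((1-x)/x)^c + 1)^2)
        (2 * (((1-x)/x)^c + 1) * (c * ((1-x)/x)^(c-1) * (-(1/x^2)))) x := by
      have := ((hdpow c x hx ht.ne').add_const 1).pow 2
      refine this.congr_deriv ?_
      push_cast; ring
    exact h1.mul h2
  exact hN.div hD hden

lemma num_nonpos (c x b t : ℝ) (hc0 : 0 < c) (hb : 0 < b) (hx0 : 0 < x)
    (hxt : x*t = 1-x)
    (key : 2*c*(b*t^2) ≤ (b*t^2+1)*(c+1-2*x)) :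
    c * ((c-1) * b * (-(1/x^2))) * (x^2 * ((b*t^2) + 1)^2)
      - c * (b*t) * (2*x * ((b*t^2) + 1)^2
          + x^2 * (2 * ((b*t^2) + 1) * (c * (b*t) * (-(1/x^2))))) ≤ 0 := by
  have h1 : c * ((c-1) * b * (-(1/x^2))) * (x^2 * ((b*t^2) + 1)^2)
      - c * (b*t) * (2*x * ((b*t^2) + 1)^2
          + x^2 * (2 * ((b*t^2) + 1) * (c * (b*t) * (-(1/x^2)))))
      = ((b*t^2+1)*c) * (-(c-1)*b*(b*t^2+1) - 2*x*(b*t)*(b*t^2+1) + 2*c*(b*t)^2) := by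
    field_simp
    ring
  have hxtb : x*t*(b*(b*t^2+1)) = (1-x)*(b*(b*t^2+1)) := by rw [hxt]
  have hE : -(c-1)*b*(b*t^2+1) - 2*x*(b*t)*(b*t^2+1) + 2*c*(b*t)^2 ≤ 0 := by
    nlinarith [mul_nonneg hb.le (sub_nonneg.2 key), hxtb]
  rw [h1]
  exact mul_nonpos_of_nonneg_of_nonpos (by positivity) hE

lemma key_ineq (c x t s : ℝ) (hc0 : 0 < c) (hc1 : c < 1) (hx0 : 0 < x)
    (hxt : x*t = 1-x) (hs0 : 0 ≤ s) (hst : s ≤ t) (hst1 : 1 ≤ s*t) :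
    2*c*s ≤ (s+1)*(c+1-2*x) := by
  have hg : 0 ≤ (1+c)*(t-s) + (1-c)*(s*t-1) := by nlinarith
  have h2 : x*t*s = (1-x)*s := by rw [hxt]
  nlinarith [mul_nonneg hx0.le hg, h2, hxt]

/-- For 0 < c < 1, L(x) = (((1-x)/x)^c + 1)⁻¹ is concave on (0,1/2]. -/
theorem stmt8 (c : ℝ) (hc0 : 0 < c) (hc1 : c < 1) :
    ConcaveOn ℝ (Set.Ioc (0 : ℝ) (1 / 2))
      (fun x : ℝ => (((1 - x) / x) ^ c + 1)⁻¹) := by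
  have hcont : ContinuousOn (fun x : ℝ => (((1-x)/x)^c + 1)⁻¹) (Set.Ioc 0 (1/2)) := by
    apply ContinuousOn.inv₀
    · apply ContinuousOn.add _ continuousOn_const
      apply ContinuousOn.rpow_const
      · exact (continuousOn_const.sub continuousOn_id).div continuousOn_id
          (fun x hx => ne_of_gt hx.1)
      · intro x hx
        exact Or.inl (div_pos (by linarith [hx.2]) hx.1).ne'
    · intro x hx
      have : (0:ℝ) ≤ ((1-x)/x)^c := Real.rpow_nonneg
        (le_of_lt (div_pos (by linarith [hx.2]) hx.1)) c
      positivity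
  apply concaveOn_of_hasDerivWithinAt2_nonpos (convex_Ioc _ _) hcont
      (f' := fun x : ℝ => c * ((1-x)/x) ^ (c-1) / (x^2 * (((1-x)/x)^c + 1)^2))
      (f'' := fun x : ℝ =>
        (c * ((c-1) * ((1-x)/x)^(c-2) * (-(1/x^2))) * (x^2 * (((1-x)/x)^c + 1)^2)
          - c * ((1-x)/x)^(c-1) *
            (2*x * (((1-x)/x)^c + 1)^2
              + x^2 * (2 * (((1-x)/x)^c + 1) * (c * ((1-x)/x)^(c-1) * (-(1/x^2))))))
          / (x^2 * (((1-x)/x)^c + 1)^2)^2)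
  · intro x hx
    rw [interior_Ioc] at hx
    exact (hd1 c x hx.1.ne' (div_pos (by linarith [hx.2]) hx.1)).hasDerivWithinAt
  · intro x hx
    rw [interior_Ioc] at hx
    exact (hd2 c x hx.1.ne' (div_pos (by linarith [hx.2]) hx.1)).hasDerivWithinAt
  · intro x hx
    rw [interior_Ioc] at hx
    obtain ⟨hx0, hx2⟩ := hx
    have ht0 : 0 < (1-x)/x := div_pos (by linarith) hx0
    have ht1 : 1 ≤ (1-x)/x := (one_le_div hx0).2 (by linarith)
    have hb : 0 < ((1-x)/x)^(c-2) := Real.rpow_pos_of_pos ht0 _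
    have ha : ((1-x)/x)^(c-1) = ((1-x)/x)^(c-2) * ((1-x)/x) := by
      rw [show c-1 = (c-2)+1 by ring, Real.rpow_add_one ht0.ne']
    have hsq : ((1-x)/x)^c = ((1-x)/x)^(c-2) * ((1-x)/x)^2 := by
      rw [← Real.rpow_natCast ((1-x)/x) 2, ← Real.rpow_add ht0]
      norm_num
    have hxt : x * ((1-x)/x) = 1-x := by field_simp
    have hst : ((1-x)/x)^c ≤ (1-x)/x := by
      have := Real.rpow_le_rpow_of_exponent_le ht1 hc1.le
      rwa [Real.rpow_one] at this
    have hst1 : 1 ≤ ((1-x)/x)^c * ((1-x)/x) := by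
      rw [← Real.rpow_add_one ht0.ne']
      have := Real.rpow_le_rpow_of_exponent_le ht1 (show (0:ℝ) ≤ c + 1 by linarith)
      rwa [Real.rpow_zero] at this
    have key := key_ineq c x ((1-x)/x) (((1-x)/x)^c) hc0 hc1 hx0 hxt
      (Real.rpow_nonneg ht0.le c) hst hst1
    rw [hsq] at key
    have hmain := num_nonpos c x (((1-x)/x)^(c-2)) ((1-x)/x) hc0 hb hx0 hxt key
    rw [ha, hsq]
    apply div_nonpos_of_nonpos_of_nonneg _ (by positivity)
    exact hmain
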